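/- Let W_c := {f + θ(f) : f ∈ X_c} be the graph of θ over X_c. Then S(W_c) = W_c, i.e., the center manifold is invariant under the time-one map S. -/

import Mathlib

/-- Invariance of the center manifold: `S(W_c) = W_c`, where `W_c` is the graph
of `θ` over `E_c`, characterized as the set of points lying on eternal orbits of
`S` in `ℓ_{Λ₋,Λ₊}`. -/
theorem stmt_8 {X : Type*} [NormedAddCommGroup X] [NormedSpace ℝ X]
    (Pc Ps : X →L[ℝ] X) (hproj : ∀ x, Pc x + Ps x = x)
    (S : X → X) (θ : X → X)
    (Λm Λp : ℝ) (hΛ : 0 < Λm ∧ Λm < Λp)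
    (w : ℤ → ℝ) (hw : ∀ k : ℤ, w k = if 0 ≤ k then Λp ^ (-k) else Λm ^ (-k))
    (Wc : Set X)
    (hWcdef : Wc = {x | ∃ f, Pc f = f ∧ x = f + θ f})
    (hWcorb : ∀ x, x ∈ Wc ↔ ∃ h : ℤ → X, (∃ C, ∀ k, w k * ‖h k‖ ≤ C) ∧
      (∀ k : ℤ, S (h (k - 1)) = h k) ∧ h 0 = x) :
    S '' Wc = Wc := by
  obtain ⟨hΛm, hmp⟩ := hΛ
  have hΛp : 0 < Λp := hΛm.trans hmp
  -- weight comparison for forward shift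
  have hW1 : ∀ k : ℤ, w k ≤ Λp * w (k + 1) := by
    intro k
    rw [hw, hw]
    by_cases h0 : 0 ≤ k
    · rw [if_pos h0, if_pos (by omega)]
      have he : -k = 1 + (-(k + 1)) := by ring
      rw [he, zpow_one_add₀ hΛp.ne']
    · rw [if_neg h0]
      by_cases h1 : 0 ≤ k + 1
      · have hk : k = -1 := by omega
        subst hk
        norm_num
        linarith
      · rw [if_neg h1]
        have he : -k = 1 + (-(k + 1)) := by ring
        rw [he, zpow_one_add₀ hΛm.ne']
        have hp : (0:ℝ) < Λm ^ (-(k + 1)) := zpow_pos hΛm _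
        nlinarith
  -- weight comparison for backward shift
  have hW2 : ∀ k : ℤ, w k ≤ Λm⁻¹ * w (k - 1) := by
    intro k
    rw [hw, hw]
    by_cases h0 : 0 ≤ k - 1
    · rw [if_pos h0, if_pos (by omega)]
      have he : -k = -1 + (-(k - 1)) := by ring
      rw [he, zpow_add₀ hΛp.ne', zpow_neg_one]
      have hp : (0:ℝ) < Λp ^ (-(k - 1)) := zpow_pos hΛp _
      have hinv : Λp⁻¹ ≤ Λm⁻¹ := by
        apply one_div_le_one_div_of_le hΛm hmp.le |>.trans_eq (one_div _) |>.trans_eq' (one_div Λp)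
      nlinarith [inv_pos.mpr hΛp]
    · rw [if_neg h0]
      by_cases h1 : 0 ≤ k
      · have hk : k = 0 := by omega
        subst hk
        norm_num
        rw [inv_mul_cancel₀ hΛm.ne']
      · rw [if_neg h1]
        have he : -k = -1 + (-(k - 1)) := by ring
        rw [he, zpow_add₀ hΛm.ne', zpow_neg_one]
  ext x
  constructor
  · rintro ⟨y, hy, rfl⟩
    obtain ⟨h, ⟨C, hC⟩, hS, h0⟩ := (hWcorb y).mp hy
    rw [hWcorb]
    refine ⟨fun k => h (k + 1), ⟨Λp * C, fun k => ?_⟩, fun k => ?_, ?_⟩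
    · have h1 := hC (k + 1)
      have h2 := hW1 k
      have h3 : (0:ℝ) ≤ ‖h (k + 1)‖ := norm_nonneg _
      nlinarith
    · have := hS (k + 1)
      have hk : k + 1 - 1 = k := by ring
      rw [hk] at this
      show S (h (k - 1 + 1)) = h (k + 1)
      rw [show k - 1 + 1 = k by ring, this]
    · show h (0 + 1) = S y
      have := hS 1
      norm_num at this
      rw [← h0, this]
      norm_num
  · intro hx
    obtain ⟨h, ⟨C, hC⟩, hS, h0⟩ := (hWcorb x).mp hx
    refine ⟨h (-1), ?_, ?_⟩
    · rw [hWcorb]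
      refine ⟨fun k => h (k - 1), ⟨Λm⁻¹ * C, fun k => ?_⟩, fun k => ?_, ?_⟩
      · have h1 := hC (k - 1)
        have h2 := hW2 k
        have h3 : (0:ℝ) ≤ ‖h (k - 1)‖ := norm_nonneg _
        have h4 : (0:ℝ) < Λm⁻¹ := inv_pos.mpr hΛm
        nlinarith
      · have := hS (k - 1)
        rw [show k - 1 - 1 = k - 1 - 1 by ring] at this
        exact this
      · norm_num
    · have := hS 0
      norm_num at this
      rw [this, h0]
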